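/- Let σ, λ > 0, ω(x) = (σ√(2π))^{-1} exp(−x²/(2σ²) + |x|/λ) on ℝ, κ_a(x) = exp(−a|x|) for a > 0, and α ≥ 1. Then: (i) ‖ω/κ_a‖_{L_∞(ℝ)} = (σ√(2π))^{-1} exp(σ²(a + λ^{−1})²/2); (ii) the minimum over a > 0 of ‖κ_a^{1/α}‖_{L_1(ℝ)}^α · ‖ω/κ_a‖_{L_∞(ℝ)} = (2α/a)^α (σ√(2π))^{-1} exp(σ²(a+λ^{−1})²/2) is attained at a_* = (√(1 + 4αλ²/σ²) − 1)/(2λ); and (iii) (‖κ_{a_*}^{1/α}‖_{L_1}^α/‖ω^{1/α}‖_{L_1}^α)·‖ω/κ_{a_*}‖_{L_∞} = (√(2α/π) / (a_* σ (1 + erf(σ/(λ√(2α))))))^α · exp(σ² a_* (a_* + 2/λ)/2). -/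

import Mathlib

open MeasureTheory Real Set
open scoped ENNReal

/-- The error function `erf(z) = (2/√π)∫₀^z e^{−t²} dt`. -/
noncomputable def erf (z : ℝ) : ℝ := 2 / Real.sqrt π * ∫ t in (0:ℝ)..z, Real.exp (-t ^ 2)

lemma aux_eLpNorm_top {f : ℝ → ℝ} (hf : Continuous f) (hnn : ∀ x, 0 ≤ f x) {M : ℝ}
    (hub : ∀ x, f x ≤ M) {x₀ : ℝ} (hx₀ : f x₀ = M) :
    eLpNorm f ⊤ volume = ENNReal.ofReal M := by
  rw [eLpNorm_exponent_top]
  refine le_antisymm (eLpNormEssSup_le_of_ae_bound (C := M)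
    (Filter.Eventually.of_forall fun x => by
      rw [Real.norm_eq_abs, abs_of_nonneg (hnn x)]; exact hub x)) ?_
  by_contra h
  push_neg at h
  obtain ⟨c, hc0, hc1, hc2⟩ := ENNReal.lt_iff_exists_real_btwn.mp h
  have hMc : c < M := by
    by_contra hcm
    exact absurd (ENNReal.ofReal_le_ofReal (not_lt.mp hcm)) (not_le.mpr hc2)
  have hae : ∀ᵐ x : ℝ, f x < c := by
    filter_upwards [ae_le_eLpNormEssSup (f := f) (μ := volume)] with x hx
    have h2 : (‖f x‖₊ : ENNReal) < ENNReal.ofReal c := lt_of_le_of_lt hx hc1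
    rw [show ((‖f x‖₊ : ENNReal)) = ENNReal.ofReal ‖f x‖ from (ofReal_norm _).symm] at h2
    have := (ENNReal.ofReal_lt_ofReal_iff_of_nonneg (norm_nonneg _)).mp h2
    calc f x ≤ ‖f x‖ := le_abs_self _
    _ < c := this
  have hU : IsOpen {x : ℝ | c < f x} := isOpen_lt continuous_const hf
  have hpos := hU.measure_pos volume ⟨x₀, by simpa [hx₀] using hMc⟩
  have h0 : volume {x : ℝ | c < f x} = 0 := by
    have := ae_iff.mp hae
    refine measure_mono_null ?_ this
    intro x hx
    simp only [mem_setOf_eq, not_lt] at *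
    exact hx.le
  exact hpos.ne' h0

lemma aux_exp_abs_integral {c : ℝ} (hc : 0 < c) :
    ∫ x : ℝ, Real.exp (-(c * |x|)) = 2 / c := by
  have h1 : ∫ x : ℝ, Real.exp (-(c * |x|)) = 2 * ∫ x in Ioi (0:ℝ), Real.exp (-(c * x)) := by
    rw [← integral_comp_abs (f := fun x => Real.exp (-(c * x)))]
  have h2 : ∫ x in Ioi (0:ℝ), Real.exp (-(c * x))
      = c⁻¹ • ∫ x in Ioi (0:ℝ), Real.exp (-x) := by
    have := integral_comp_mul_left_Ioi (fun y => Real.exp (-y)) 0 hc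
    simpa using this
  rw [h1, h2, integral_exp_neg_Ioi_zero]
  rw [smul_eq_mul]
  ring

lemma aux_shift_Ioi (g : ℝ → ℝ) (m : ℝ) :
    ∫ x in Ioi (0:ℝ), g (x - m) = ∫ x in Ioi (-m), g x := by
  have h := (measurePreserving_add_right (volume : Measure ℝ) (-m)).setIntegral_preimage_emb
    (measurableEmbedding_addRight (-m)) g (Ioi (-m))
  simp only [preimage_add_const_Ioi] at h
  rw [← h]
  simp [sub_eq_add_neg]

lemma aux_gauss_split {w : ℝ} (hw : w ≤ 0) :
    ∫ t in Ioi w, Real.exp (-t ^ 2)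
      = (∫ t in (0:ℝ)..(-w), Real.exp (-t ^ 2)) + Real.sqrt π / 2 := by
  have hint : Integrable (fun t : ℝ => Real.exp (-t ^ 2)) := by
    simpa using integrable_exp_neg_mul_sq (one_pos)
  have hsplit : ∫ t in Ioi w, Real.exp (-t ^ 2)
      = (∫ t in Ioc w 0, Real.exp (-t ^ 2)) + ∫ t in Ioi (0:ℝ), Real.exp (-t ^ 2) := by
    rw [← Ioc_union_Ioi_eq_Ioi hw]
    exact setIntegral_union (Ioc_disjoint_Ioi le_rfl) measurableSet_Ioi
      hint.integrableOn hint.integrableOn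
  have hIoi : ∫ t in Ioi (0:ℝ), Real.exp (-t ^ 2) = Real.sqrt π / 2 := by
    simpa using integral_gaussian_Ioi 1
  have hIoc : ∫ t in Ioc w 0, Real.exp (-t ^ 2) = ∫ t in (0:ℝ)..(-w), Real.exp (-t ^ 2) := by
    rw [← intervalIntegral.integral_of_le hw]
    rw [show (∫ t in w..(0:ℝ), Real.exp (-t ^ 2))
        = ∫ t in w..(0:ℝ), Real.exp (-(-t) ^ 2) by simp]
    rw [intervalIntegral.integral_comp_neg fun t => Real.exp (-t ^ 2)]
    simp
  rw [hsplit, hIoi, hIoc]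

lemma aux_gauss_Ioi {k m : ℝ} (hk : 0 < k) (hm : 0 ≤ m) :
    ∫ x in Ioi (0:ℝ), Real.exp (-((x - m) / k) ^ 2)
      = k * ((∫ t in (0:ℝ)..(m / k), Real.exp (-t ^ 2)) + Real.sqrt π / 2) := by
  have h1 := aux_shift_Ioi (fun y => Real.exp (-(y / k) ^ 2)) m
  have h2 : ∫ x in Ioi (-m), Real.exp (-(x / k) ^ 2)
      = k * ∫ t in Ioi (-(m / k)), Real.exp (-t ^ 2) := by
    have := integral_comp_mul_left_Ioi (fun t => Real.exp (-t ^ 2)) (-m) (inv_pos.mpr hk)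
    simp only [inv_inv, smul_eq_mul] at this
    simp only [div_eq_inv_mul, this]
    congr 1
    ring_nf
  rw [h1, h2, aux_gauss_split (by
      simp only [neg_nonpos]
      positivity), neg_neg]

lemma aux_two_int (σ lam α : ℝ) (hσ : 0 < σ) (hlam : 0 < lam) (hα0 : 0 < α) :
    (2:ℝ) * ∫ x in Ioi (0:ℝ), Real.exp ((-x ^ 2 / (2 * σ ^ 2) + x / lam) * (1 / α))
      = Real.exp (σ ^ 2 / (2 * α * lam ^ 2))
        * ((σ * Real.sqrt (2 * α)) * Real.sqrt π * (1 + erf (σ / (lam * Real.sqrt (2 * α))))) := by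
  have hαne : α ≠ 0 := ne_of_gt hα0
  have hsq2α : Real.sqrt (2 * α) ^ 2 = 2 * α := Real.sq_sqrt (by positivity)
  have hsqrt2α_pos : 0 < Real.sqrt (2 * α) := Real.sqrt_pos.mpr (by positivity)
  have hπ : 0 < Real.sqrt π := Real.sqrt_pos.mpr Real.pi_pos
  have e3 : ∀ y : ℝ, Real.exp ((-y ^ 2 / (2 * σ ^ 2) + y / lam) * (1 / α))
      = Real.exp (σ ^ 2 / (2 * α * lam ^ 2))
        * Real.exp (-((y - σ ^ 2 / lam) / (σ * Real.sqrt (2 * α))) ^ 2) := by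
    intro y
    rw [← Real.exp_add]
    congr 1
    rw [div_pow, show (σ * Real.sqrt (2 * α)) ^ 2 = 2 * α * σ ^ 2 by
      rw [mul_pow, hsq2α]; ring]
    field_simp
    ring
  simp only [e3]
  rw [MeasureTheory.integral_const_mul, aux_gauss_Ioi (by positivity) (by positivity)]
  have hzeq : σ ^ 2 / lam / (σ * Real.sqrt (2 * α)) = σ / (lam * Real.sqrt (2 * α)) := by
    field_simp
  rw [hzeq]
  have hIz : (∫ t in (0:ℝ)..(σ / (lam * Real.sqrt (2 * α))), Real.exp (-t ^ 2))
      = Real.sqrt π / 2 * erf (σ / (lam * Real.sqrt (2 * α))) := by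
    rw [erf]
    field_simp
  rw [hIz]
  ring
set_option maxHeartbeats 1000000 in
/-- `ω(x) = (σ√(2π))⁻¹ exp(−x²/(2σ²) + |x|/λ)` (Gaussian `ϱ`, exponential
`ψ`), `κ_a(x) = e^{−a|x|}`, `α ≥ 1`:
(i) `‖ω/κ_a‖_{L_∞(ℝ)} = (σ√(2π))⁻¹ exp(σ²(a + λ⁻¹)²/2)`;
(ii) `a ↦ ‖κ_a^{1/α}‖₁^α ‖ω/κ_a‖_∞ = (2α/a)^α (σ√(2π))⁻¹ exp(σ²(a+λ⁻¹)²/2)` attains its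
minimum over `a > 0` at `a⋆ = (√(1 + 4αλ²/σ²) − 1)/(2λ)`;
(iii) `(‖κ_{a⋆}^{1/α}‖₁^α/‖ω^{1/α}‖₁^α)‖ω/κ_{a⋆}‖_∞
  = (√(2α/π)/(a⋆σ(1 + erf(σ/(λ√(2α))))))^α exp(σ²a⋆(a⋆ + 2/λ)/2)`. -/
theorem stmt_14 (σ lam : ℝ) (hσ : 0 < σ) (hlam : 0 < lam)
    (α : ℝ) (hα : 1 ≤ α) (ω : ℝ → ℝ) (κ : ℝ → ℝ → ℝ) (astar : ℝ)
    (hω : ω = fun x : ℝ =>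
      (σ * Real.sqrt (2 * π))⁻¹ * Real.exp (-x ^ 2 / (2 * σ ^ 2) + |x| / lam))
    (hκ : κ = fun (a x : ℝ) => Real.exp (-(a * |x|)))
    (hastar : astar = (Real.sqrt (1 + 4 * α * lam ^ 2 / σ ^ 2) - 1) / (2 * lam)) :
    (∀ a : ℝ, 0 < a →
        eLpNorm (fun x => ω x / κ a x) ⊤ volume
          = ENNReal.ofReal
              ((σ * Real.sqrt (2 * π))⁻¹ * Real.exp (σ ^ 2 * (a + lam⁻¹) ^ 2 / 2)))
    ∧ (∀ a : ℝ, 0 < a →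
        (2 * α / astar) ^ α * ((σ * Real.sqrt (2 * π))⁻¹
            * Real.exp (σ ^ 2 * (astar + lam⁻¹) ^ 2 / 2))
          ≤ (2 * α / a) ^ α * ((σ * Real.sqrt (2 * π))⁻¹
              * Real.exp (σ ^ 2 * (a + lam⁻¹) ^ 2 / 2)))
    ∧ (∀ a : ℝ, 0 < a →
        ENNReal.ofReal ((∫ x : ℝ, κ a x ^ (1 / α)) ^ α)
            * eLpNorm (fun x => ω x / κ a x) ⊤ volume
          = ENNReal.ofReal ((2 * α / a) ^ α * ((σ * Real.sqrt (2 * π))⁻¹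
              * Real.exp (σ ^ 2 * (a + lam⁻¹) ^ 2 / 2))))
    ∧ ENNReal.ofReal
          ((∫ x : ℝ, κ astar x ^ (1 / α)) ^ α / (∫ x : ℝ, ω x ^ (1 / α)) ^ α)
          * eLpNorm (fun x => ω x / κ astar x) ⊤ volume
        = ENNReal.ofReal
            ((Real.sqrt (2 * α / π)
                / (astar * σ * (1 + erf (σ / (lam * Real.sqrt (2 * α)))))) ^ α
              * Real.exp (σ ^ 2 * astar * (astar + 2 / lam) / 2)) := by
  have hα0 : (0:ℝ) < α := lt_of_lt_of_le one_pos hα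
  have hαne : α ≠ 0 := ne_of_gt hα0
  set C : ℝ := (σ * Real.sqrt (2 * π))⁻¹ with hCdef
  have hC : 0 < C := by
    have : 0 < Real.sqrt (2 * π) := Real.sqrt_pos.mpr (by positivity)
    positivity
  clear_value C
  set s : ℝ := Real.sqrt (1 + 4 * α * lam ^ 2 / σ ^ 2) with hsdef
  have hs2 : s ^ 2 = 1 + 4 * α * lam ^ 2 / σ ^ 2 :=
    Real.sq_sqrt (by positivity)
  have hs1 : 1 < s := by
    nlinarith [Real.sqrt_nonneg (1 + 4 * α * lam ^ 2 / σ ^ 2), hs2,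
      div_pos (by positivity : (0:ℝ) < 4 * α * lam ^ 2) (by positivity : (0:ℝ) < σ ^ 2)]
  clear_value s
  have hast : 0 < astar := by
    rw [hastar]
    exact div_pos (by linarith) (by positivity)
  have hkey : σ ^ 2 * (astar * (astar + lam⁻¹)) = α := by
    rw [hastar]
    have h2 : (s - 1) / (2 * lam) * ((s - 1) / (2 * lam) + lam⁻¹)
        = (s ^ 2 - 1) / (4 * lam ^ 2) := by
      field_simp
      ring
    rw [h2, hs2]
    field_simp
    ring
  -- Part (i)
  have hquot : ∀ a : ℝ, (fun x => ω x / κ a x)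
      = fun x => C * Real.exp (-x ^ 2 / (2 * σ ^ 2) + |x| * (a + lam⁻¹)) := by
    intro a
    funext x
    rw [hω, hκ]
    simp only
    rw [mul_div_assoc, ← Real.exp_sub]
    congr 1
    ring_nf
  have part1 : ∀ a : ℝ, 0 < a →
      eLpNorm (fun x => ω x / κ a x) ⊤ volume
        = ENNReal.ofReal (C * Real.exp (σ ^ 2 * (a + lam⁻¹) ^ 2 / 2)) := by
    intro a ha
    have hb : 0 < a + lam⁻¹ := by positivity
    rw [hquot a]
    refine aux_eLpNorm_top ?_ (fun x => by positivity) (fun x => ?_)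
      (x₀ := σ ^ 2 * (a + lam⁻¹)) ?_
    · exact continuous_const.mul (Real.continuous_exp.comp
        (((continuous_pow 2).neg.div_const _).add (continuous_abs.mul continuous_const)))
    · refine mul_le_mul_of_nonneg_left (Real.exp_le_exp.mpr ?_) hC.le
      obtain ⟨y, hy0, hyx, hysq⟩ : ∃ y : ℝ, 0 ≤ y ∧ |x| = y ∧ x ^ 2 = y ^ 2 :=
        ⟨|x|, abs_nonneg x, rfl, (sq_abs x).symm⟩
      rw [hyx, hysq]
      have heq : σ ^ 2 * (a + lam⁻¹) ^ 2 / 2 - (-y ^ 2 / (2 * σ ^ 2) + y * (a + lam⁻¹))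
          = (y - σ ^ 2 * (a + lam⁻¹)) ^ 2 / (2 * σ ^ 2) := by
        field_simp
        ring
      nlinarith [div_nonneg (sq_nonneg (y - σ ^ 2 * (a + lam⁻¹)))
        (by positivity : (0:ℝ) ≤ 2 * σ ^ 2), heq]
    · rw [abs_of_pos (by positivity : (0:ℝ) < σ ^ 2 * (a + lam⁻¹))]
      congr 1
      field_simp
      ring
  -- κ integral
  have hκint : ∀ a : ℝ, 0 < a → ∫ x : ℝ, κ a x ^ (1 / α) = 2 * α / a := by
    intro a ha
    have he : (fun x : ℝ => κ a x ^ (1 / α)) = fun x => Real.exp (-(a / α * |x|)) := by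
      funext x
      rw [hκ]
      simp only
      rw [← Real.exp_mul]
      congr 1
      field_simp
    rw [he, aux_exp_abs_integral (by positivity)]
    rw [div_div_eq_mul_div]
  -- Part (ii)
  have part2 : ∀ a : ℝ, 0 < a →
      (2 * α / astar) ^ α * (C * Real.exp (σ ^ 2 * (astar + lam⁻¹) ^ 2 / 2))
        ≤ (2 * α / a) ^ α * (C * Real.exp (σ ^ 2 * (a + lam⁻¹) ^ 2 / 2)) := by
    intro a ha
    rw [Real.rpow_def_of_pos (by positivity : (0:ℝ) < 2 * α / astar),
      Real.rpow_def_of_pos (by positivity : (0:ℝ) < 2 * α / a)]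
    rw [mul_left_comm, mul_left_comm (Real.exp (Real.log (2 * α / a) * α)),
      ← Real.exp_add, ← Real.exp_add]
    refine mul_le_mul_of_nonneg_left (Real.exp_le_exp.mpr ?_) hC.le
    rw [Real.log_div (by positivity) (ne_of_gt hast),
      Real.log_div (by positivity) (ne_of_gt ha)]
    have hlog : Real.log a - Real.log astar ≤ a / astar - 1 := by
      have := Real.log_le_sub_one_of_pos (div_pos ha hast)
      rwa [Real.log_div (ne_of_gt ha) (ne_of_gt hast)] at this
    have h3 : α * (Real.log a - Real.log astar) ≤ α * (a / astar - 1) :=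
      mul_le_mul_of_nonneg_left hlog hα0.le
    have h4 : α * (a / astar - 1) = σ ^ 2 * (astar + lam⁻¹) * (a - astar) := by
      rw [← hkey]
      field_simp
    nlinarith [h3, h4, mul_nonneg (mul_pos hσ hσ).le (sq_nonneg (a - astar))]
  refine ⟨part1, part2, ?_, ?_⟩
  · -- Part (iii)
    intro a ha
    rw [hκint a ha, part1 a ha,
      ← ENNReal.ofReal_mul (by positivity : (0:ℝ) ≤ (2 * α / a) ^ α)]
  · -- Part (iv)
    have hZ0 : 0 ≤ σ / (lam * Real.sqrt (2 * α)) := by positivity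
    have hsq2α : Real.sqrt (2 * α) ^ 2 = 2 * α := Real.sq_sqrt (by positivity)
    have hsqrt2α_pos : 0 < Real.sqrt (2 * α) := Real.sqrt_pos.mpr (by positivity)
    have hπ : 0 < Real.sqrt π := Real.sqrt_pos.mpr Real.pi_pos
    have herf0 : 0 ≤ erf (σ / (lam * Real.sqrt (2 * α))) := by
      rw [erf]
      have : 0 ≤ ∫ t in (0:ℝ)..(σ / (lam * Real.sqrt (2 * α))), Real.exp (-t ^ 2) :=
        intervalIntegral.integral_nonneg hZ0 (fun t _ => (Real.exp_pos _).le)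
      positivity
    have hG : 0 < 1 + erf (σ / (lam * Real.sqrt (2 * α))) := by linarith
    have hIω : (∫ x : ℝ, ω x ^ (1 / α))
        = C ^ (1 / α) * (Real.exp (σ ^ 2 / (2 * α * lam ^ 2))
          * (σ * Real.sqrt (2 * α) * Real.sqrt π
            * (1 + erf (σ / (lam * Real.sqrt (2 * α)))))) := by
      have e0 : (fun x : ℝ => ω x ^ (1 / α))
          = fun x => C ^ (1 / α)
              * Real.exp ((-x ^ 2 / (2 * σ ^ 2) + |x| / lam) * (1 / α)) := by
        funext x
        rw [hω]
        simp only
        rw [Real.mul_rpow hC.le (Real.exp_pos _).le, ← Real.exp_mul]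
      rw [e0, MeasureTheory.integral_const_mul]
      congr 1
      have e2 : (fun x : ℝ => Real.exp ((-x ^ 2 / (2 * σ ^ 2) + |x| / lam) * (1 / α)))
          = fun x : ℝ =>
            (fun y : ℝ => Real.exp ((-y ^ 2 / (2 * σ ^ 2) + y / lam) * (1 / α))) |x| := by
        funext x
        simp only [sq_abs]
      rw [e2, integral_comp_abs
        (f := fun y : ℝ => Real.exp ((-y ^ 2 / (2 * σ ^ 2) + y / lam) * (1 / α)))]
      exact aux_two_int σ lam α hσ hlam hα0
    have hCα : 0 < C ^ (1 / α) := Real.rpow_pos_of_pos hC _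
    have hexpB : Real.exp (σ ^ 2 / (2 * α * lam ^ 2)) ^ α
        = Real.exp (σ ^ 2 / (2 * lam ^ 2)) := by
      rw [← Real.exp_mul]
      congr 1
      field_simp
    have hIωα : (∫ x : ℝ, ω x ^ (1 / α)) ^ α
        = C * (Real.exp (σ ^ 2 / (2 * lam ^ 2))
          * ((σ * Real.sqrt (2 * α) * Real.sqrt π) ^ α
            * (1 + erf (σ / (lam * Real.sqrt (2 * α)))) ^ α)) := by
      rw [hIω]
      rw [Real.mul_rpow hCα.le (by positivity),
        Real.mul_rpow (Real.exp_pos _).le (by positivity),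
        Real.mul_rpow (by positivity) hG.le]
      rw [← Real.rpow_mul hC.le, one_div, inv_mul_cancel₀ hαne, Real.rpow_one, hexpB]
    have hGα : 0 < (1 + erf (σ / (lam * Real.sqrt (2 * α)))) ^ α :=
      Real.rpow_pos_of_pos hG _
    have hden : 0 < C * (Real.exp (σ ^ 2 / (2 * lam ^ 2))
        * ((σ * Real.sqrt (2 * α) * Real.sqrt π) ^ α
          * (1 + erf (σ / (lam * Real.sqrt (2 * α)))) ^ α)) :=
      mul_pos hC (mul_pos (Real.exp_pos _)
        (mul_pos (Real.rpow_pos_of_pos (by positivity) _) hGα))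
    have hfrac0 : (0:ℝ) ≤ (2 * α / astar) ^ α / (C * (Real.exp (σ ^ 2 / (2 * lam ^ 2))
        * ((σ * Real.sqrt (2 * α) * Real.sqrt π) ^ α
          * (1 + erf (σ / (lam * Real.sqrt (2 * α)))) ^ α))) :=
      div_nonneg (Real.rpow_nonneg (div_pos (by positivity) hast).le α) hden.le
    rw [hκint astar hast, hIωα, part1 astar hast, ← ENNReal.ofReal_mul hfrac0]
    congr 1
    rw [div_mul_eq_mul_div, div_eq_iff hden.ne']
    have hexp2 : Real.exp (σ ^ 2 * astar * (astar + 2 / lam) / 2)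
        * Real.exp (σ ^ 2 / (2 * lam ^ 2))
        = Real.exp (σ ^ 2 * (astar + lam⁻¹) ^ 2 / 2) := by
      rw [← Real.exp_add]
      congr 1
      field_simp
      ring
    have hA0 : 0 ≤ Real.sqrt (2 * α / π)
        / (astar * σ * (1 + erf (σ / (lam * Real.sqrt (2 * α))))) :=
      div_nonneg (Real.sqrt_nonneg _) (by positivity)
    have hmulpow : (Real.sqrt (2 * α / π)
          / (astar * σ * (1 + erf (σ / (lam * Real.sqrt (2 * α)))))) ^ α
          * ((σ * Real.sqrt (2 * α) * Real.sqrt π) ^ α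
            * (1 + erf (σ / (lam * Real.sqrt (2 * α)))) ^ α)
        = (2 * α / astar) ^ α := by
      rw [← Real.mul_rpow (by positivity) hG.le,
        ← Real.mul_rpow hA0 (by positivity)]
      congr 1
      have hsd : Real.sqrt (2 * α / π) = Real.sqrt (2 * α) / Real.sqrt π :=
        Real.sqrt_div (by positivity) π
      rw [hsd, div_div, div_mul_eq_mul_div,
        div_eq_div_iff (mul_pos hπ (mul_pos (mul_pos hast hσ) hG)).ne' hast.ne']
      linear_combination (σ * Real.sqrt π * (1 + erf (σ / (lam * Real.sqrt (2 * α))))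
        * astar) * hsq2α
    rw [← hmulpow, ← hexp2]
    ring
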